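/- arXiv:0710.4024 — 5 statements merged into one kernel-verified Lean document; each statement's English description precedes it below -/
import Mathlib

section
/- For every natural number n, ∑_{k=0}^{n} C(n,k) (-1)^k / (k+1)^2 = H_{n+1} / (n+1), where H_m = ∑_{j=1}^{m} 1/j is the m-th harmonic number. -/
open Finset

lemma choose_div_succ (n k : ℕ) :
    (n.choose k : ℝ) / ((k : ℝ) + 1) = ((n + 1).choose (k + 1) : ℝ) / ((n : ℝ) + 1) := by
  rw [div_eq_div_iff (by positivity) (by positivity)]
  have h : ((Nat.succ n * n.choose k : ℕ) : ℝ) = ((Nat.choose (Nat.succ n) (Nat.succ k) * Nat.succ k : ℕ) : ℝ) := by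
    exact_mod_cast Nat.add_one_mul_choose_eq n k
  push_cast at h
  linarith [h]

lemma alt_choose_div (m : ℕ) :
    ∑ j ∈ range (m + 1), (-1 : ℝ) ^ j * (m.choose j : ℝ) / ((j : ℝ) + 1) = 1 / ((m : ℝ) + 1) := by
  have h1 : ∀ j ∈ range (m + 1), (-1 : ℝ) ^ j * (m.choose j : ℝ) / ((j : ℝ) + 1)
      = (-1 : ℝ) ^ j * ((m + 1).choose (j + 1) : ℝ) / ((m : ℝ) + 1) := by
    intro j _
    rw [mul_div_assoc, choose_div_succ, mul_div_assoc]
  rw [Finset.sum_congr rfl h1]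
  have h2 : ∑ j ∈ range (m + 1), (-1 : ℝ) ^ j * ((m + 1).choose (j + 1) : ℝ) = 1 := by
    have halt := Int.alternating_sum_range_choose_of_ne (n := m + 1) (by omega)
    have hcast : ∑ i ∈ range (m + 2), (-1 : ℝ) ^ i * ((m + 1).choose i : ℝ) = 0 := by
      exact_mod_cast congrArg (Int.cast : ℤ → ℝ) halt
    rw [Finset.sum_range_succ'] at hcast
    simp only [pow_succ, Nat.choose_zero_right, pow_zero, Nat.cast_one, one_mul] at hcast
    have hneg : ∑ x ∈ range (m + 1), (-1 : ℝ) ^ x * -1 * ((m + 1).choose (x + 1) : ℝ) = -1 := by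
      linarith [hcast]
    have heq : ∑ j ∈ range (m + 1), (-1 : ℝ) ^ j * ((m + 1).choose (j + 1) : ℝ)
        = -∑ x ∈ range (m + 1), (-1 : ℝ) ^ x * -1 * ((m + 1).choose (x + 1) : ℝ) := by
      rw [← Finset.sum_neg_distrib]
      exact Finset.sum_congr rfl fun x _ => by ring
    rw [heq, hneg]; ring
  rw [← Finset.sum_div, h2]

lemma harmonic_alt (m : ℕ) :
    ∑ j ∈ range m, (-1 : ℝ) ^ j * (m.choose (j + 1) : ℝ) / ((j : ℝ) + 1)
      = ∑ j ∈ range m, (1 : ℝ) / ((j : ℝ) + 1) := by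
  induction m with
  | zero => simp
  | succ m ih =>
    have split : ∀ j ∈ range (m + 1), (-1 : ℝ) ^ j * ((m + 1).choose (j + 1) : ℝ) / ((j : ℝ) + 1)
        = (-1 : ℝ) ^ j * (m.choose (j + 1) : ℝ) / ((j : ℝ) + 1)
          + (-1 : ℝ) ^ j * (m.choose j : ℝ) / ((j : ℝ) + 1) := by
      intro j _
      rw [Nat.choose_succ_succ]
      push_cast
      ring
    rw [Finset.sum_congr rfl split, Finset.sum_add_distrib, alt_choose_div m]
    have htrunc : ∑ j ∈ range (m + 1), (-1 : ℝ) ^ j * (m.choose (j + 1) : ℝ) / ((j : ℝ) + 1)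
        = ∑ j ∈ range m, (-1 : ℝ) ^ j * (m.choose (j + 1) : ℝ) / ((j : ℝ) + 1) := by
      rw [Finset.sum_range_succ, Nat.choose_succ_self]
      simp
    rw [htrunc, ih, Finset.sum_range_succ]

theorem stmt_2 (n : ℕ) :
    ∑ k ∈ Finset.range (n + 1), (n.choose k : ℝ) * (-1) ^ k / ((k : ℝ) + 1) ^ 2 =
      (∑ j ∈ Finset.range (n + 1), (1 : ℝ) / (j + 1)) / (n + 1) := by
  have step : ∀ k ∈ range (n + 1), (n.choose k : ℝ) * (-1) ^ k / ((k : ℝ) + 1) ^ 2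
      = ((-1 : ℝ) ^ k * ((n + 1).choose (k + 1) : ℝ) / ((k : ℝ) + 1)) / ((n : ℝ) + 1) := by
    intro k _
    have h : (n.choose k : ℝ) * (-1) ^ k / ((k : ℝ) + 1) ^ 2
        = ((n.choose k : ℝ) / ((k : ℝ) + 1)) * ((-1 : ℝ) ^ k / ((k : ℝ) + 1)) := by
      have hk : ((k : ℝ) + 1) ≠ 0 := by positivity
      field_simp
    rw [h, choose_div_succ]
    ring
  rw [Finset.sum_congr rfl step, ← Finset.sum_div]
  rw [harmonic_alt (n + 1)]
end

section
/- For reals β > 0 and α > 0 and natural number n, ∫_{0}^{1} (t^{β-1} - t^{α-1}) (1-t)^n / log t dt = ∑_{k=0}^{n} C(n,k) (-1)^k log((k+β)/(k+α)). -/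
open MeasureTheory intervalIntegral Set Metric

lemma meas_core (a b : ℝ) :
    AEStronglyMeasurable (fun t : ℝ => (t ^ (b - 1) - t ^ (a - 1)) / Real.log t)
      (volume.restrict (Set.uIoc (0:ℝ) 1)) := by
  have h : Measurable fun t : ℝ => (t ^ (b - 1) - t ^ (a - 1)) / Real.log t :=
    Measurable.div (by fun_prop) Real.measurable_log
  exact h.aestronglyMeasurable

lemma abs_bound {a b t : ℝ} (hab : a ≤ b) (ht : t ∈ Set.Ioc (0:ℝ) 1) :
    |(t ^ (b - 1) - t ^ (a - 1)) / Real.log t| ≤ (b - a) * t ^ (a - 1) := by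
  obtain ⟨ht0, ht1⟩ := ht
  rcases eq_or_lt_of_le ht1 with h1 | h1
  · subst h1
    simp [Real.log_one]
    linarith
  · have hlog : Real.log t < 0 := Real.log_neg ht0 h1
    have hmono : t ^ (b - 1) ≤ t ^ (a - 1) :=
      Real.rpow_le_rpow_of_exponent_ge ht0 (le_of_lt h1) (by linarith)
    have hE : t ^ (b - 1) = t ^ (a - 1) * Real.exp (Real.log t * (b - a)) := by
      rw [← Real.rpow_def_of_pos ht0, ← Real.rpow_add ht0]
      ring_nf
    have hexp : Real.log t * (b - a) + 1 ≤ Real.exp (Real.log t * (b - a)) :=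
      Real.add_one_le_exp _
    have hpa : (0:ℝ) < t ^ (a - 1) := Real.rpow_pos_of_pos ht0 _
    have key : t ^ (a - 1) - t ^ (b - 1) ≤ (b - a) * t ^ (a - 1) * (-Real.log t) := by
      rw [hE]
      nlinarith
    rw [abs_div, abs_of_neg hlog, abs_of_nonpos (by linarith : t ^ (b-1) - t ^ (a-1) ≤ 0)]
    rw [div_le_iff₀ (by linarith)]
    nlinarith

lemma integ {a b : ℝ} (ha : 0 < a) (hb : 0 < b) :
    IntervalIntegrable (fun t => (t ^ (b - 1) - t ^ (a - 1)) / Real.log t) volume 0 1 := by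
  have hmin : 0 < min a b := lt_min ha hb
  apply IntervalIntegrable.mono_fun'
    (g := fun t => |b - a| * t ^ (min a b - 1))
  · exact (intervalIntegral.intervalIntegrable_rpow' (by linarith)).const_mul _
  · exact meas_core a b
  · filter_upwards [ae_restrict_mem measurableSet_uIoc] with t ht
    rw [Set.uIoc_of_le zero_le_one] at ht
    rcases le_total a b with hab | hab
    · rw [min_eq_left hab, abs_of_nonneg (by linarith)]
      rw [Real.norm_eq_abs]
      exact abs_bound hab ht
    · rw [min_eq_right hab, abs_of_nonpos (by linarith)]
      calc ‖(t ^ (b-1) - t ^ (a-1)) / Real.log t‖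
          = |(t ^ (a-1) - t ^ (b-1)) / Real.log t| := by
            rw [Real.norm_eq_abs, ← neg_sub, neg_div, abs_neg]
        _ ≤ (a - b) * t ^ (b - 1) := abs_bound hab ht
        _ = -(b - a) * t ^ (b - 1) := by ring

lemma frullani {a b : ℝ} (ha : 0 < a) (hb : 0 < b) :
    ∫ t in (0:ℝ)..1, (t ^ (b - 1) - t ^ (a - 1)) / Real.log t = Real.log (b / a) := by
  set φ : ℝ → ℝ := fun x => ∫ t in (0:ℝ)..1, (t ^ (x - 1) - t ^ (a - 1)) / Real.log t with hφ
  have hderiv : ∀ x ∈ Set.uIcc a b, HasDerivAt φ x⁻¹ x := by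
    intro x hx
    have hx0 : 0 < x := by
      rcases Set.mem_uIcc.mp hx with ⟨h1, _⟩ | ⟨h1, _⟩ <;> linarith
    have hne : ∀ᵐ t : ℝ, t ≠ (1:ℝ) := by
      rw [MeasureTheory.ae_iff]
      simp only [not_not]
      simpa [Set.setOf_eq_eq_singleton] using Real.volume_singleton
    have H := intervalIntegral.hasDerivAt_integral_of_dominated_loc_of_deriv_le
        (F := fun z t => (t ^ (z - 1) - t ^ (a - 1)) / Real.log t)
        (F' := fun z t => t ^ (z - 1))
        (bound := fun t => t ^ (x / 2 - 1))
        (a := (0:ℝ)) (b := 1) (x₀ := x) (μ := volume)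
        (Metric.ball_mem_nhds x (half_pos hx0))
        (Filter.Eventually.of_forall fun z => meas_core a z)
        (integ ha hx0)
        (by
          have h : Measurable fun t : ℝ => t ^ (x - 1) := by fun_prop
          exact h.aestronglyMeasurable)
        (Filter.Eventually.of_forall (by
          intro t ht z hz
          rw [Set.uIoc_of_le zero_le_one] at ht
          rw [Real.norm_eq_abs, abs_of_nonneg (Real.rpow_nonneg (le_of_lt ht.1) _)]
          have : |z - x| < x / 2 := by rwa [mem_ball, Real.dist_eq] at hz
          have hz2 : x / 2 - 1 ≤ z - 1 := by
            have := abs_lt.mp this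
            linarith [this.1]
          exact Real.rpow_le_rpow_of_exponent_ge ht.1 ht.2 hz2))
        (intervalIntegral.intervalIntegrable_rpow' (by linarith))
        (by
          filter_upwards [hne] with t ht1 ht z hz
          rw [Set.uIoc_of_le zero_le_one] at ht
          have ht0 : 0 < t := ht.1
          have hlt : t < 1 := lt_of_le_of_ne ht.2 ht1
          have hlogne : Real.log t ≠ 0 := ne_of_lt (Real.log_neg ht0 hlt)
          have h0 : HasDerivAt (fun z : ℝ => t ^ (z - 1)) (t ^ (z - 1) * Real.log t) z := by
            have h1 := (Real.hasStrictDerivAt_const_rpow ht0 (z - 1)).hasDerivAt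
            have h2 := h1.comp z ((hasDerivAt_id z).sub_const 1)
            simpa [Function.comp_def] using h2
          have h3 := (h0.sub_const (t ^ (a - 1))).div_const (Real.log t)
          have he : t ^ (z - 1) * Real.log t / Real.log t = t ^ (z - 1) := by
            field_simp
          rw [he] at h3
          exact h3)
    obtain ⟨-, hd⟩ := H
    have hval : (∫ t in (0:ℝ)..1, t ^ (x - 1)) = x⁻¹ := by
      rw [integral_rpow (Or.inl (by linarith))]
      rw [sub_add_cancel, Real.one_rpow, Real.zero_rpow (ne_of_gt hx0)]
      simp [one_div]
    rw [hval] at hd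
    exact hd
  have hi : IntervalIntegrable (fun x => x⁻¹) volume a b := by
    apply intervalIntegrable_inv
    · intro x hx
      rcases Set.mem_uIcc.mp hx with ⟨h1, _⟩ | ⟨h1, _⟩ <;> nlinarith
    · exact continuousOn_id
  have heval := intervalIntegral.integral_eq_sub_of_hasDerivAt hderiv hi
  rw [integral_inv_of_pos ha hb] at heval
  have hφa : φ a = 0 := by
    simp [hφ]
  rw [hφa, sub_zero] at heval
  exact heval.symm

theorem stmt_3 (α β : ℝ) (hα : 0 < α) (hβ : 0 < β) (n : ℕ) :
    ∫ t in (0:ℝ)..1, (t ^ (β - 1) - t ^ (α - 1)) * (1 - t) ^ n / Real.log t =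
      ∑ k ∈ Finset.range (n + 1),
        (n.choose k : ℝ) * (-1) ^ k * Real.log ((k + β) / (k + α)) := by
  have heq : Set.EqOn
      (fun t : ℝ => (t ^ (β - 1) - t ^ (α - 1)) * (1 - t) ^ n / Real.log t)
      (fun t : ℝ => ∑ k ∈ Finset.range (n + 1),
        (n.choose k : ℝ) * (-1) ^ k * ((t ^ ((k + β) - 1) - t ^ ((k + α) - 1)) / Real.log t))
      (Set.uIcc (0:ℝ) 1) := by
    intro t ht
    rcases eq_or_ne t 0 with h0 | h0
    · subst h0
      simp [Real.log_zero]
    · have ht0 : 0 < t := by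
        rw [Set.uIcc_of_le zero_le_one] at ht
        exact lt_of_le_of_ne ht.1 (Ne.symm h0)
      simp only
      have hexp : ((1:ℝ) - t) ^ n
          = ∑ k ∈ Finset.range (n + 1), (-t) ^ k * 1 ^ (n - k) * (n.choose k : ℝ) := by
        rw [show (1:ℝ) - t = -t + 1 by ring, add_pow]
      rw [hexp, Finset.mul_sum, Finset.sum_div]
      refine Finset.sum_congr rfl fun k _ => ?_
      have e1 : t ^ ((k : ℝ) + β - 1) = t ^ (β - 1) * t ^ k := by
        rw [show (k : ℝ) + β - 1 = (β - 1) + (k : ℝ) by ring, Real.rpow_add ht0,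
          Real.rpow_natCast]
      have e2 : t ^ ((k : ℝ) + α - 1) = t ^ (α - 1) * t ^ k := by
        rw [show (k : ℝ) + α - 1 = (α - 1) + (k : ℝ) by ring, Real.rpow_add ht0,
          Real.rpow_natCast]
      rw [e1, e2]
      ring
  rw [intervalIntegral.integral_congr heq,
    intervalIntegral.integral_finset_sum (fun (k : ℕ) _ =>
      (integ (by positivity : (0:ℝ) < (k:ℝ) + α) (by positivity : (0:ℝ) < (k:ℝ) + β)).const_mul
        ((n.choose k : ℝ) * (-1) ^ k))]
  exact Finset.sum_congr rfl fun (k : ℕ) _ => by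
    rw [intervalIntegral.integral_const_mul,
      frullani (by positivity : (0:ℝ) < (k:ℝ) + α) (by positivity : (0:ℝ) < (k:ℝ) + β)]
end

section
/- ∫_{0}^{1} log x · log(1-x) dx = 2 - π²/6. -/
open Real MeasureTheory intervalIntegral Filter Topology

lemma cont_aux (n : ℕ) : Continuous (fun x : ℝ => x ^ (n+1) * (-Real.log x)) := by
  have h : (fun x : ℝ => x ^ (n+1) * (-Real.log x)) = fun x => -(x ^ n * (x * Real.log x)) := by
    funext x; ring
  rw [h]
  exact ((continuous_pow n).mul Real.continuous_mul_log).neg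

lemma integral_pow_neg_log (n : ℕ) :
    ∫ x in (0:ℝ)..1, x ^ (n+1) * (-Real.log x) = 1 / ((n:ℝ)+2)^2 := by
  set m : ℕ := n + 2 with hm
  have hmpos : (0:ℝ) < (m:ℝ) := by positivity
  set F : ℝ → ℝ := fun x => (x ^ m - (m:ℝ) * (x ^ (n+1) * (x * Real.log x))) / (m:ℝ)^2 with hF
  have hcont : ContinuousOn F (Set.Icc (0:ℝ) 1) := by
    apply Continuous.continuousOn
    exact ((continuous_pow m).sub (continuous_const.mul
      ((continuous_pow (n+1)).mul Real.continuous_mul_log))).div_const _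
  have hderiv : ∀ x ∈ Set.Ioo (0:ℝ) 1,
      HasDerivWithinAt F (x ^ (n+1) * (-Real.log x)) (Set.Ioi x) x := by
    intro x hx
    have hx0 : x ≠ 0 := ne_of_gt hx.1
    have h1 : HasDerivAt (fun y : ℝ => y ^ m) ((m:ℝ) * x ^ (m-1)) x := by
      simpa using hasDerivAt_pow m x
    have h2 : HasDerivAt Real.log x⁻¹ x := Real.hasDerivAt_log hx0
    have h3 : HasDerivAt (fun y : ℝ => y ^ m * Real.log y)
        ((m:ℝ) * x ^ (m-1) * Real.log x + x ^ m * x⁻¹) x := h1.mul h2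
    have h4 : HasDerivAt F
        (((m:ℝ) * x ^ (m-1) - (m:ℝ) * ((m:ℝ) * x ^ (m-1) * Real.log x + x ^ m * x⁻¹)) / (m:ℝ)^2)
        x := by
      have heq : F = fun y => (y ^ m - (m:ℝ) * (y ^ m * Real.log y)) / (m:ℝ)^2 := by
        funext y; simp only [hF, hm]; ring
      rw [heq]
      exact ((h1.sub (h3.const_mul _)).div_const _)
    have key : ((m:ℝ) * x ^ (m-1) - (m:ℝ) * ((m:ℝ) * x ^ (m-1) * Real.log x + x ^ m * x⁻¹)) / (m:ℝ)^2
        = x ^ (n+1) * (-Real.log x) := by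
      have hm1 : m - 1 = n + 1 := by omega
      have hxm : x ^ m = x ^ (n+1) * x := by rw [hm]; ring
      rw [hm1, hxm]
      field_simp
      ring
    rw [key] at h4
    exact h4.hasDerivWithinAt
  have hint : IntervalIntegrable (fun x : ℝ => x ^ (n+1) * (-Real.log x)) volume 0 1 :=
    (cont_aux n).intervalIntegrable 0 1
  have := intervalIntegral.integral_eq_sub_of_hasDeriv_right_of_le (by norm_num) hcont hderiv hint
  rw [this]
  simp only [hF]
  norm_num [hm]

lemma term_integral (n : ℕ) :
    ∫ x in (0:ℝ)..1, (-Real.log x) * (x ^ (n+1) / ((n:ℝ)+1))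
      = 1 / (((n:ℝ)+1) * ((n:ℝ)+2)^2) := by
  have h : (fun x : ℝ => (-Real.log x) * (x ^ (n+1) / ((n:ℝ)+1)))
      = fun x => (x ^ (n+1) * (-Real.log x)) * (1/((n:ℝ)+1)) := by
    funext x; ring
  rw [h, intervalIntegral.integral_mul_const, integral_pow_neg_log]
  have : ((n:ℝ)+1) ≠ 0 := by positivity
  field_simp

lemma contF (n : ℕ) : Continuous (fun x : ℝ => (-Real.log x) * (x ^ (n+1) / ((n:ℝ)+1))) := by
  have h : (fun x : ℝ => (-Real.log x) * (x ^ (n+1) / ((n:ℝ)+1)))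
      = fun x => (x ^ (n+1) * (-Real.log x)) * (1/((n:ℝ)+1)) := by
    funext x; ring
  rw [h]
  exact (cont_aux n).mul continuous_const

lemma summable_val : Summable (fun n : ℕ => 1 / (((n:ℝ)+1) * ((n:ℝ)+2)^2)) := by
  have h0 : Summable (fun n : ℕ => 1 / ((n:ℝ)+1)^2) := by
    have := Real.summable_one_div_nat_pow.mpr (le_refl 2)
    rw [← summable_nat_add_iff 1] at this
    convert this using 2 with n
    · rfl
    push_cast
    ring
  refine Summable.of_nonneg_of_le (fun n => by positivity) (fun n => ?_) h0
  apply one_div_le_one_div_of_le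
  · positivity
  · nlinarith [sq_nonneg ((n:ℝ)+1), Nat.cast_nonneg (α := ℝ) n]

lemma hasSum_val : HasSum (fun n : ℕ => 1 / (((n:ℝ)+1) * ((n:ℝ)+2)^2)) (2 - Real.pi ^ 2 / 6) := by
  have h1 : HasSum (fun n : ℕ => 1/((n:ℝ)+1) - 1/((n:ℝ)+2)) 1 := by
    rw [hasSum_iff_tendsto_nat_of_nonneg]
    · have key : ∀ N : ℕ, ∑ i ∈ Finset.range N, (1/((i:ℝ)+1) - 1/((i:ℝ)+2)) = 1 - 1/((N:ℝ)+1) := by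
        intro N
        calc ∑ i ∈ Finset.range N, (1/((i:ℝ)+1) - 1/((i:ℝ)+2))
            = ∑ i ∈ Finset.range N,
              ((fun i : ℕ => 1/((i:ℝ)+1)) i - (fun i : ℕ => 1/((i:ℝ)+1)) (i+1)) := by
              apply Finset.sum_congr rfl; intros; push_cast; ring
          _ = 1 - 1/((N:ℝ)+1) := by rw [Finset.sum_range_sub']; norm_num
      simp_rw [key]
      have ht := tendsto_one_div_add_atTop_nhds_zero_nat (𝕜 := ℝ)
      simpa using (tendsto_const_nhds (x := (1:ℝ))).sub ht
    · intro i
      have h2 : (0:ℝ) < (i:ℝ)+1 := by positivity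
      have h3 : (0:ℝ) < (i:ℝ)+2 := by positivity
      rw [sub_nonneg]
      apply one_div_le_one_div_of_le h2
      linarith
  have h2 : HasSum (fun n : ℕ => 1/((n:ℝ)+2)^2) (Real.pi ^ 2 / 6 - 1) := by
    have hz := hasSum_zeta_two
    have := (hasSum_nat_add_iff' (f := fun n : ℕ => 1/(n:ℝ)^2) 2).mpr hz
    have hsum : ∑ i ∈ Finset.range 2, (1:ℝ)/(i:ℝ)^2 = 1 := by
      simp [Finset.sum_range_succ]
    rw [hsum] at this
    convert this using 2 with n
    · rfl
    push_cast
    ring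
  have h3 := h1.sub h2
  have heq : (fun n : ℕ => (1/((n:ℝ)+1) - 1/((n:ℝ)+2)) - 1/((n:ℝ)+2)^2)
      = fun n : ℕ => 1 / (((n:ℝ)+1) * ((n:ℝ)+2)^2) := by
    funext n
    have ha : ((n:ℝ)+1) ≠ 0 := by positivity
    have hb : ((n:ℝ)+2) ≠ 0 := by positivity
    field_simp
    ring
  rw [heq] at h3
  convert h3 using 1
  · rfl
  ring

theorem stmt_5 :
    ∫ x in (0:ℝ)..1, Real.log x * Real.log (1 - x) = 2 - Real.pi ^ 2 / 6 := by
  set F : ℕ → ℝ → ℝ := fun n x => (-Real.log x) * (x ^ (n+1) / ((n:ℝ)+1)) with hFdef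
  have hint : ∀ n, IntegrableOn (F n) (Set.Ioo (0:ℝ) 1) volume := fun n =>
    ((contF n).integrableOn_Icc (a := 0) (b := 1)).mono_set Set.Ioo_subset_Icc_self
  have hval : ∀ n, ∫ x in Set.Ioo (0:ℝ) 1, F n x = 1 / (((n:ℝ)+1) * ((n:ℝ)+2)^2) := by
    intro n
    rw [← MeasureTheory.integral_Ioc_eq_integral_Ioo,
      ← intervalIntegral.integral_of_le (zero_le_one)]
    exact term_integral n
  have hnorm : ∀ n, ∫ x in Set.Ioo (0:ℝ) 1, ‖F n x‖ = 1 / (((n:ℝ)+1) * ((n:ℝ)+2)^2) := by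
    intro n
    rw [← hval n]
    apply MeasureTheory.setIntegral_congr_fun measurableSet_Ioo
    intro x hx
    have hlog : Real.log x ≤ 0 := Real.log_nonpos (le_of_lt hx.1) (le_of_lt hx.2)
    have hxpos : (0:ℝ) < x := hx.1
    have : (0:ℝ) ≤ F n x := by
      apply mul_nonneg (by linarith) (by positivity)
    simp [Real.norm_eq_abs, abs_of_nonneg this]
  have hsummable : Summable (fun n : ℕ => ∫ x in Set.Ioo (0:ℝ) 1, ‖F n x‖) := by
    simpa only [hnorm] using summable_val
  have hswap := MeasureTheory.integral_tsum_of_summable_integral_norm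
    (μ := volume.restrict (Set.Ioo (0:ℝ) 1)) hint hsummable
  have hpt : ∀ x ∈ Set.Ioo (0:ℝ) 1, Real.log x * Real.log (1 - x) = ∑' n, F n x := by
    intro x hx
    have habs : |x| < 1 := abs_lt.mpr ⟨by linarith [hx.1], hx.2⟩
    have hs := (hasSum_pow_div_log_of_abs_lt_one habs).mul_left (-Real.log x)
    have : Real.log x * Real.log (1 - x) = (-Real.log x) * (-Real.log (1 - x)) := by ring
    rw [this, ← hs.tsum_eq]
  rw [intervalIntegral.integral_of_le zero_le_one, MeasureTheory.integral_Ioc_eq_integral_Ioo]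
  rw [MeasureTheory.setIntegral_congr_fun measurableSet_Ioo hpt, ← hswap]
  rw [tsum_congr hval]
  exact hasSum_val.tsum_eq
end

section
/- ∑_{n=1}^{∞} H_n / (n² (n+1)) = 2 ζ(3) - ζ(2), where H_n is the n-th harmonic number. -/
open Finset Filter Real Function

noncomputable def hsum (n : ℕ) : ℝ := ∑ j ∈ Finset.range n, (1:ℝ)/(j+1)

lemma hsum_succ (n : ℕ) : hsum (n+1) = hsum n + 1/((n:ℝ)+1) := by
  simp [hsum, Finset.sum_range_succ]

lemma hsum_nonneg (n : ℕ) : 0 ≤ hsum n :=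
  Finset.sum_nonneg fun j _ => by positivity

lemma hsum_le_sqrt (n : ℕ) : hsum n ≤ 2 * Real.sqrt n := by
  induction n with
  | zero => simp [hsum]
  | succ n ih =>
    have s2 : Real.sqrt ((n:ℝ)+1) ^ 2 = (n:ℝ)+1 := Real.sq_sqrt (by positivity)
    have t2 : Real.sqrt (n:ℝ) ^ 2 = (n:ℝ) := Real.sq_sqrt n.cast_nonneg
    have hs : (0:ℝ) ≤ Real.sqrt ((n:ℝ)+1) := Real.sqrt_nonneg _
    have ht : (0:ℝ) ≤ Real.sqrt (n:ℝ) := Real.sqrt_nonneg _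
    have hst : Real.sqrt (n:ℝ) ≤ Real.sqrt ((n:ℝ)+1) :=
      Real.sqrt_le_sqrt (by linarith)
    have hnpos : (0:ℝ) < (n:ℝ)+1 := by positivity
    have hsum2 : Real.sqrt ((n:ℝ)+1) + Real.sqrt (n:ℝ) ≤ 2*((n:ℝ)+1) := by
      nlinarith [sq_nonneg (Real.sqrt ((n:ℝ)+1) - 1), sq_nonneg (Real.sqrt (n:ℝ) - 1)]
    have key : 1/((n:ℝ)+1) ≤ 2*(Real.sqrt ((n:ℝ)+1) - Real.sqrt (n:ℝ)) := by
      rw [div_le_iff₀ hnpos]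
      nlinarith [mul_nonneg (sub_nonneg.2 hst)
        (by linarith : (0:ℝ) ≤ 2*((n:ℝ)+1) - (Real.sqrt ((n:ℝ)+1) + Real.sqrt (n:ℝ)))]
    rw [hsum_succ]
    push_cast
    linarith

lemma tele (c : ℝ) (hc : 0 < c) :
    HasSum (fun k : ℕ => 1/((k:ℝ)+c) - 1/((k:ℝ)+1+c)) (1/c) := by
  rw [hasSum_iff_tendsto_nat_of_nonneg]
  · have hps : ∀ n : ℕ, ∑ i ∈ Finset.range n, ((1:ℝ)/((i:ℝ)+c) - 1/((i:ℝ)+1+c))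
        = 1/c - 1/((n:ℝ)+c) := by
      intro n
      have h := Finset.sum_range_sub' (f := fun i : ℕ => (1:ℝ)/((i:ℝ)+c)) n
      push_cast at h
      simpa using h
    simp only [hps]
    have h1 : Tendsto (fun n : ℕ => 1/((n:ℝ)+c)) atTop (nhds 0) := by
      simp only [one_div]
      exact (tendsto_atTop_add_const_right _ c tendsto_natCast_atTop_atTop).inv_tendsto_atTop
    simpa using (tendsto_const_nhds (x := 1/c)).sub h1
  · intro i
    have : 1/((i:ℝ)+1+c) ≤ 1/((i:ℝ)+c) :=
      one_div_le_one_div_of_le (by positivity) (by linarith)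
    linarith

lemma L2 (m : ℕ) :
    HasSum (fun k : ℕ => 1/(((k:ℝ)+1)*((k:ℝ)+1+((m:ℝ)+1))))
      (hsum (m+1) / ((m:ℝ)+1)) := by
  have h1 : ∀ i ∈ Finset.range (m+1),
      HasSum (fun k : ℕ => 1/((k:ℝ)+((i:ℝ)+1)) - 1/((k:ℝ)+1+((i:ℝ)+1))) (1/((i:ℝ)+1)) :=
    fun i _ => tele _ (by positivity)
  have h2 := hasSum_sum h1
  have hval : ∑ i ∈ Finset.range (m+1), (1:ℝ)/((i:ℝ)+1) = hsum (m+1) := rfl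
  rw [hval] at h2
  have heq : (fun k : ℕ => ∑ i ∈ Finset.range (m+1),
        ((1:ℝ)/((k:ℝ)+((i:ℝ)+1)) - 1/((k:ℝ)+1+((i:ℝ)+1))))
      = fun k : ℕ => 1/((k:ℝ)+1) - 1/((k:ℝ)+1+((m:ℝ)+1)) := by
    funext k
    have h := Finset.sum_range_sub' (f := fun i : ℕ => (1:ℝ)/((k:ℝ)+(i:ℝ)+1)) (m+1)
    push_cast at h
    rw [show (1:ℝ)/((k:ℝ)+1) - 1/((k:ℝ)+1+((m:ℝ)+1))
        = 1/((k:ℝ)+0+1) - 1/((k:ℝ)+((m:ℝ)+1)+1) by ring, ← h]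
    exact Finset.sum_congr rfl fun i _ => by ring_nf
  rw [heq] at h2
  have h4 := h2.mul_left (1/((m:ℝ)+1))
  have hkey : (fun k : ℕ => 1/(((k:ℝ)+1)*((k:ℝ)+1+((m:ℝ)+1))))
      = fun k : ℕ => (1/((m:ℝ)+1)) * ((1:ℝ)/((k:ℝ)+1) - 1/((k:ℝ)+1+((m:ℝ)+1))) := by
    funext k
    have hk : (0:ℝ) < (k:ℝ)+1 := by positivity
    have hk2 : (0:ℝ) < (k:ℝ)+1+((m:ℝ)+1) := by positivity
    have hm : (0:ℝ) < (m:ℝ)+1 := by positivity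
    field_simp
    try ring
  rw [hkey]
  convert h4 using 1; rfl
  ring

noncomputable def Ffn (p : ℕ × ℕ) : ℝ :=
  1/(((p.1:ℝ)+1)*((p.2:ℝ)+1)*((p.1:ℝ)+(p.2:ℝ)+2))

noncomputable def Gfn (p : ℕ × ℕ) : ℝ :=
  1/(((p.1:ℝ)+1)*((p.1:ℝ)+(p.2:ℝ)+2)^2)

noncomputable def ffn (p : ℕ × ℕ) : ℝ :=
  if p.1 < p.2 then 1/(((p.1:ℝ)+1)*((p.2:ℝ)+1)^2) else 0

noncomputable def Efn (n : ℕ) : ℝ := hsum (n+1)/((n:ℝ)+1)^2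

noncomputable def gfn (n : ℕ) : ℝ := hsum n/((n:ℝ)+1)^2

lemma Ffn_nonneg (p : ℕ × ℕ) : 0 ≤ Ffn p := by unfold Ffn; positivity
lemma Gfn_nonneg (p : ℕ × ℕ) : 0 ≤ Gfn p := by unfold Gfn; positivity
lemma ffn_nonneg (p : ℕ × ℕ) : 0 ≤ ffn p := by
  unfold ffn; split <;> positivity

lemma hasSum_F_row (j : ℕ) : HasSum (fun k => Ffn (j, k)) (Efn j) := by
  have h := (L2 j).mul_left (1/((j:ℝ)+1))
  have heq : (fun k : ℕ => Ffn (j, k))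
      = fun k : ℕ => (1/((j:ℝ)+1)) * (1/(((k:ℝ)+1)*((k:ℝ)+1+((j:ℝ)+1)))) := by
    funext k
    unfold Ffn
    have h1 : (0:ℝ) < (j:ℝ)+1 := by positivity
    have h2 : (0:ℝ) < (k:ℝ)+1 := by positivity
    have h3 : (0:ℝ) < (k:ℝ)+1+((j:ℝ)+1) := by positivity
    simp only []
    rw [div_mul_div_comm]
    rw [one_mul]
    congr 1
    ring
  rw [heq]
  convert h using 1; rfl
  unfold Efn
  rw [div_mul_div_comm, one_mul, sq]

lemma summable_Efn : Summable Efn := by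
  have hb : Summable (fun n : ℕ => 2/((n:ℝ)+1)^((3:ℝ)/2)) := by
    have h := (Real.summable_one_div_nat_rpow (p := (3:ℝ)/2)).mpr (by norm_num)
    have h2 := (summable_nat_add_iff (f := fun n : ℕ => 1/(n:ℝ)^((3:ℝ)/2)) 1).2 h
    have h3 : Summable (fun n : ℕ => 1/((n:ℝ)+1)^((3:ℝ)/2)) :=
      h2.congr fun n => by norm_cast
    exact (h3.mul_left 2).congr fun n => by rw [mul_one_div]
  refine Summable.of_nonneg_of_le (fun n => div_nonneg (hsum_nonneg _) (by positivity)) (fun n => ?_) hb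
  unfold Efn
  have ha : (0:ℝ) < (n:ℝ)+1 := by positivity
  have hrw : ((n:ℝ)+1)^((3:ℝ)/2) * Real.sqrt ((n:ℝ)+1) = ((n:ℝ)+1)^2 := by
    rw [Real.sqrt_eq_rpow, ← Real.rpow_add ha, show (3:ℝ)/2 + 1/2 = 2 by norm_num,
      show ((2:ℝ) = ((2:ℕ):ℝ)) by norm_num, Real.rpow_natCast]
  have hH : hsum (n+1) ≤ 2 * Real.sqrt ((n:ℝ)+1) := by
    have := hsum_le_sqrt (n+1)
    push_cast at this
    exact this
  rw [div_le_div_iff₀ (by positivity) (by positivity)]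
  calc hsum (n+1) * ((n:ℝ)+1)^((3:ℝ)/2)
      ≤ (2 * Real.sqrt ((n:ℝ)+1)) * ((n:ℝ)+1)^((3:ℝ)/2) := by
        apply mul_le_mul_of_nonneg_right hH (by positivity)
    _ = 2 * ((n:ℝ)+1)^2 := by rw [mul_assoc, mul_comm (Real.sqrt _), hrw]

lemma summable_Ffn : Summable Ffn := by
  refine (summable_prod_of_nonneg (fun p => Ffn_nonneg p)).2 ⟨fun j => (hasSum_F_row j).summable, ?_⟩
  have : (fun j => ∑' k, Ffn (j, k)) = Efn := funext fun j => (hasSum_F_row j).tsum_eq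
  rw [this]
  exact summable_Efn

lemma tsum_Ffn : ∑' p, Ffn p = ∑' j, Efn j := by
  rw [Summable.tsum_prod' summable_Ffn (fun j => (hasSum_F_row j).summable)]
  exact tsum_congr fun j => (hasSum_F_row j).tsum_eq

lemma F_eq_G_add (p : ℕ × ℕ) : Ffn p = Gfn p + Gfn p.swap := by
  obtain ⟨a, b⟩ := p
  unfold Ffn Gfn
  simp only [Prod.swap_prod_mk]
  have h1 : (0:ℝ) < (a:ℝ)+1 := by positivity
  have h2 : (0:ℝ) < (b:ℝ)+1 := by positivity
  have h3 : (0:ℝ) < (a:ℝ)+(b:ℝ)+2 := by positivity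
  have h4 : (0:ℝ) < (b:ℝ)+(a:ℝ)+2 := by positivity
  field_simp
  ring

lemma G_le_F (p : ℕ × ℕ) : Gfn p ≤ Ffn p := by
  obtain ⟨a, b⟩ := p
  unfold Ffn Gfn
  dsimp only
  have h1 : (0:ℝ) < (a:ℝ)+1 := by positivity
  have h3 : (0:ℝ) < (a:ℝ)+(b:ℝ)+2 := by positivity
  apply one_div_le_one_div_of_le (by positivity)
  have : (b:ℝ)+1 ≤ (a:ℝ)+(b:ℝ)+2 := by linarith [Nat.cast_nonneg (α := ℝ) a]
  nlinarith [mul_nonneg (mul_nonneg h1.le h3.le) (sub_nonneg.2 this)]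

lemma summable_Gfn : Summable Gfn :=
  Summable.of_nonneg_of_le Gfn_nonneg G_le_F summable_Ffn

lemma summable_Gswap : Summable (fun p : ℕ × ℕ => Gfn p.swap) :=
  summable_Gfn.prod_symm

lemma tsum_F_eq_two_G : ∑' p, Ffn p = 2 * ∑' p, Gfn p := by
  calc ∑' p, Ffn p = ∑' p : ℕ × ℕ, (Gfn p + Gfn p.swap) := tsum_congr F_eq_G_add
    _ = (∑' p, Gfn p) + ∑' p : ℕ × ℕ, Gfn p.swap := Summable.tsum_add summable_Gfn summable_Gswap
    _ = 2 * ∑' p, Gfn p := by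
        rw [show ∑' p : ℕ × ℕ, Gfn p.swap = ∑' p, Gfn p from (Equiv.prodComm ℕ ℕ).tsum_eq Gfn]
        ring

def imap : ℕ × ℕ → ℕ × ℕ := fun p => (p.1, p.1 + p.2 + 1)

lemma imap_inj : Function.Injective imap := by
  rintro ⟨a, b⟩ ⟨c, d⟩ h
  simp only [imap, Prod.mk.injEq] at h
  obtain ⟨h1, h2⟩ := h
  subst h1
  simp only [Prod.mk.injEq, true_and]
  omega

lemma imap_supp : ∀ x, x ∉ Set.range imap → ffn x = 0 := by
  rintro ⟨j, n⟩ hx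
  by_contra hne
  have hlt : j < n := by
    by_contra hge
    exact hne (if_neg hge)
  exact hx ⟨(j, n - j - 1), by simp [imap]; omega⟩

lemma ffn_comp_imap : ∀ p : ℕ × ℕ, ffn (imap p) = Gfn p := by
  rintro ⟨j, k⟩
  unfold ffn imap Gfn
  simp only [Prod.fst, Prod.snd]
  rw [if_pos (by omega)]
  push_cast
  ring_nf

lemma tsum_G_eq_f : ∑' p, Gfn p = ∑' p, ffn p := by
  have h := imap_inj.tsum_eq (f := ffn) (Function.support_subset_iff'.mpr imap_supp)
  rw [← h]
  exact tsum_congr fun p => (ffn_comp_imap p).symm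

lemma summable_ffn : Summable ffn :=
  (imap_inj.summable_iff imap_supp).1
    (summable_Gfn.congr fun p => (ffn_comp_imap p).symm)

lemma ffn_col_summable (n : ℕ) : Summable (fun j => ffn (j, n)) :=
  summable_of_ne_finset_zero (s := Finset.range n)
    (fun j hj => if_neg (by simp only [Finset.mem_range] at hj; omega))

lemma tsum_ffn_col (n : ℕ) : ∑' j, ffn (j, n) = gfn n := by
  have hz : ∀ j ∉ Finset.range n, ffn (j, n) = 0 :=
    fun j hj => if_neg (by simp only [Finset.mem_range] at hj; omega)
  rw [tsum_eq_sum hz]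
  unfold gfn hsum
  rw [Finset.sum_div]
  refine Finset.sum_congr rfl fun j hj => ?_
  unfold ffn
  rw [if_pos (Finset.mem_range.1 hj), div_div]

lemma tsum_ffn : ∑' p, ffn p = ∑' n, gfn n := by
  have hcomm := Summable.tsum_comm' (f := fun j n => ffn (j, n)) summable_ffn
    (fun j => summable_ffn.prod_factor j) ffn_col_summable
  rw [Summable.tsum_prod' summable_ffn (fun j => summable_ffn.prod_factor j), ← hcomm]
  exact tsum_congr fun n => tsum_ffn_col n

lemma summable_gfn : Summable gfn := by
  refine Summable.of_nonneg_of_le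
    (fun n => div_nonneg (hsum_nonneg _) (by positivity)) (fun n => ?_) summable_Efn
  unfold gfn Efn
  have hle : hsum n ≤ hsum (n+1) := by
    rw [hsum_succ]
    have : (0:ℝ) ≤ 1/((n:ℝ)+1) := by positivity
    linarith
  gcongr

lemma summable_z3 : Summable (fun n : ℕ => (1:ℝ)/((n:ℝ)+1)^3) := by
  have h := summable_one_div_nat_pow.mpr (by norm_num : 2 ≤ 3)
  exact ((summable_nat_add_iff 1).2 h).congr fun n => by norm_cast

lemma Efn_eq (n : ℕ) : Efn n = gfn n + 1/((n:ℝ)+1)^3 := by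
  unfold Efn gfn
  rw [hsum_succ]
  have h : (0:ℝ) < (n:ℝ)+1 := by positivity
  field_simp
  try ring

lemma euler : ∑' j, Efn j = 2 * ∑' n : ℕ, (1:ℝ)/((n:ℝ)+1)^3 := by
  have hE2g : ∑' j, Efn j = 2 * ∑' n, gfn n := by
    rw [← tsum_Ffn, tsum_F_eq_two_G, tsum_G_eq_f, tsum_ffn]
  have hEgz : ∑' j, Efn j = (∑' n, gfn n) + ∑' n : ℕ, (1:ℝ)/((n:ℝ)+1)^3 := by
    rw [← Summable.tsum_add summable_gfn summable_z3]
    exact tsum_congr Efn_eq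
  linarith

noncomputable def qfn (p : ℕ × ℕ) : ℝ :=
  if p.1 ≤ p.2 then 1/(((p.1:ℝ)+1)*(((p.2:ℝ)+1)*((p.2:ℝ)+2))) else 0

lemma qfn_nonneg (p : ℕ × ℕ) : 0 ≤ qfn p := by
  unfold qfn; split <;> positivity

lemma hasSum_q_row (j : ℕ) : HasSum (fun k => qfn (j, j + k)) (1/((j:ℝ)+1)^2) := by
  have h := (tele ((j:ℝ)+1) (by positivity)).mul_left (1/((j:ℝ)+1))
  have heq : (fun k : ℕ => qfn (j, j + k))
      = fun k : ℕ => (1/((j:ℝ)+1)) * ((1:ℝ)/((k:ℝ)+((j:ℝ)+1)) - 1/((k:ℝ)+1+((j:ℝ)+1))) := by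
    funext k
    unfold qfn
    rw [if_pos (by omega : j ≤ j + k)]
    have h1 : (0:ℝ) < (j:ℝ)+1 := by positivity
    have h2 : (0:ℝ) < (k:ℝ)+((j:ℝ)+1) := by positivity
    have h3 : (0:ℝ) < (k:ℝ)+1+((j:ℝ)+1) := by positivity
    push_cast
    rw [div_sub_div _ _ (ne_of_gt h2) (ne_of_gt h3), div_mul_div_comm, one_mul]
    congr 1
    · ring
    · ring
  rw [heq]
  convert h using 1; rfl
  rw [sq]
  rw [div_mul_div_comm, one_mul]

lemma q_row_supp (j : ℕ) : ∀ n, n ∉ Set.range (fun k => j + k) → qfn (j, n) = 0 := by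
  intro n hn
  apply if_neg
  intro hle
  exact hn ⟨n - j, by simp; omega⟩

lemma q_add_inj (j : ℕ) : Function.Injective (fun k => j + k) := add_right_injective j

lemma summable_q_row (j : ℕ) : Summable (fun n => qfn (j, n)) :=
  ((q_add_inj j).summable_iff (q_row_supp j)).1 (hasSum_q_row j).summable

lemma tsum_q_row (j : ℕ) : ∑' n, qfn (j, n) = 1/((j:ℝ)+1)^2 := by
  rw [← (q_add_inj j).tsum_eq (f := fun n => qfn (j, n)) (Function.support_subset_iff'.mpr (q_row_supp j))]
  exact (hasSum_q_row j).tsum_eq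

lemma zeta2' : HasSum (fun n : ℕ => (1:ℝ)/((n:ℝ)+1)^2) (Real.pi^2/6) := by
  have h0 : HasSum (fun n : ℕ => (1:ℝ)/(n:ℝ)^2) (Real.pi^2/6) := hasSum_zeta_two
  have h := (hasSum_nat_add_iff (f := fun n : ℕ => (1:ℝ)/(n:ℝ)^2) 1).2
    (show HasSum (fun n : ℕ => (1:ℝ)/(n:ℝ)^2)
      (Real.pi^2/6 + ∑ i ∈ Finset.range 1, (1:ℝ)/(i:ℝ)^2) by simpa using h0)
  have e : (fun n : ℕ => (1:ℝ)/((↑(n+1):ℝ))^2) = fun n : ℕ => (1:ℝ)/((n:ℝ)+1)^2 :=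
    funext fun n => by norm_cast
  exact e ▸ h

lemma summable_qfn : Summable qfn := by
  refine (summable_prod_of_nonneg qfn_nonneg).2 ⟨summable_q_row, ?_⟩
  refine Summable.congr zeta2'.summable fun j => ?_
  exact (tsum_q_row j).symm

lemma tsum_qfn : ∑' p, qfn p = Real.pi^2/6 := by
  rw [Summable.tsum_prod' summable_qfn summable_q_row]
  rw [tsum_congr tsum_q_row]
  exact zeta2'.tsum_eq

noncomputable def T2fn (n : ℕ) : ℝ := hsum (n+1)/(((n:ℝ)+1)*((n:ℝ)+2))

lemma tsum_q_col (n : ℕ) : ∑' j, qfn (j, n) = T2fn n := by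
  have hz : ∀ j ∉ Finset.range (n+1), qfn (j, n) = 0 :=
    fun j hj => if_neg (by simp only [Finset.mem_range] at hj; omega)
  rw [tsum_eq_sum hz]
  unfold T2fn hsum
  rw [Finset.sum_div]
  refine Finset.sum_congr rfl fun j hj => ?_
  unfold qfn
  rw [if_pos (by simp only [Finset.mem_range] at hj; omega : j ≤ n), div_div]

lemma qfn_col_summable (n : ℕ) : Summable (fun j => qfn (j, n)) :=
  summable_of_ne_finset_zero (s := Finset.range (n+1))
    (fun j hj => if_neg (by simp only [Finset.mem_range] at hj; omega))

lemma summable_T2fn : Summable T2fn := by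
  have h := ((summable_prod_of_nonneg (fun p : ℕ × ℕ => qfn_nonneg p.swap)).1
    summable_qfn.prod_symm).2
  refine h.congr fun n => ?_
  exact tsum_q_col n

lemma tsum_T2fn : ∑' n, T2fn n = Real.pi^2/6 := by
  have hcomm := Summable.tsum_comm' (f := fun j n => qfn (j, n)) summable_qfn
    summable_q_row qfn_col_summable
  calc ∑' n, T2fn n = ∑' n, ∑' j, qfn (j, n) := tsum_congr fun n => (tsum_q_col n).symm
    _ = ∑' j, ∑' n, qfn (j, n) := hcomm
    _ = Real.pi^2/6 := by rw [← Summable.tsum_prod' summable_qfn summable_q_row]; exact tsum_qfn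

theorem stmt_16 :
    ∑' n : ℕ, (∑ j ∈ Finset.range (n + 1), (1 : ℝ) / (j + 1)) /
        (((n : ℝ) + 1) ^ 2 * ((n : ℝ) + 2)) =
      2 * (∑' n : ℕ, (1 : ℝ) / ((n : ℝ) + 1) ^ 3) - Real.pi ^ 2 / 6 := by
  have HS1 : HasSum Efn (2 * ∑' n : ℕ, (1:ℝ)/((n:ℝ)+1)^3) := by
    have h := summable_Efn.hasSum
    rwa [euler] at h
  have HS2 : HasSum T2fn (Real.pi^2/6) := by
    have h := summable_T2fn.hasSum
    rwa [tsum_T2fn] at h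
  have HS := HS1.sub HS2
  have heq : (fun n : ℕ => (∑ j ∈ Finset.range (n + 1), (1 : ℝ) / (j + 1)) /
        (((n : ℝ) + 1) ^ 2 * ((n : ℝ) + 2))) = fun n => Efn n - T2fn n := by
    funext n
    unfold Efn T2fn
    have hh : (∑ j ∈ Finset.range (n + 1), (1 : ℝ) / (j + 1)) = hsum (n+1) := by
      unfold hsum
      exact Finset.sum_congr rfl fun j _ => by norm_cast
    rw [hh]
    have h1 : (0:ℝ) < (n:ℝ)+1 := by positivity
    have h2 : (0:ℝ) < (n:ℝ)+2 := by positivity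
    field_simp
    ring
  rw [heq]
  exact HS.tsum_eq
end

section
/- ∑_{n=1}^{∞} H_n / n³ = (1/2) ζ(2)² = π⁴/72, where H_n is the n-th harmonic number. -/
open Finset Real

noncomputable def f2 (n : ℕ) : ℝ := 1 / ((n : ℝ) + 1) ^ 2
noncomputable def f1 (n : ℕ) : ℝ := 1 / ((n : ℝ) + 1)
noncomputable def Q (k : ℕ) : ℝ := ∑ i ∈ range (k + 1), f2 i
noncomputable def Hh (k : ℕ) : ℝ := ∑ i ∈ range (k + 1), f1 i

lemma hz2 : HasSum f2 (π ^ 2 / 6) := by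
  have h := (hasSum_nat_add_iff' (f := fun n : ℕ => (1:ℝ)/(n:ℝ)^2) 1).2 hasSum_zeta_two
  simp only [range_one, sum_singleton, Nat.cast_zero] at h
  norm_num at h
  convert h using 2 with n
  all_goals try rfl
  simp [f2]

lemma hz4 : HasSum (fun n : ℕ => (1:ℝ) / ((n:ℝ)+1)^4) (π ^ 4 / 90) := by
  have h := (hasSum_nat_add_iff' (f := fun n : ℕ => (1:ℝ)/(n:ℝ)^4) 1).2 hasSum_zeta_four
  simp only [range_one, sum_singleton, Nat.cast_zero] at h
  norm_num at h
  convert h using 2 with n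
  all_goals try rfl
  ring_nf

lemma hg4 : HasSum (fun k : ℕ => (1:ℝ) / ((k:ℝ)+2)^4) (π ^ 4 / 90 - 1) := by
  have h := (hasSum_nat_add_iff' (f := fun n : ℕ => (1:ℝ)/((n:ℝ)+1)^4) 1).2 hz4
  simp only [range_one, sum_singleton, Nat.cast_zero] at h
  norm_num at h
  convert h using 2 with n
  all_goals try rfl
  ring_nf

lemma f2nonneg (n : ℕ) : 0 ≤ f2 n := by unfold f2; positivity
lemma f1nonneg (n : ℕ) : 0 ≤ f1 n := by unfold f1; positivity

noncomputable def F (p : ℕ × ℕ) : ℝ := f2 p.1 * f2 p.2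

lemma sF : Summable F :=
  hz2.summable.mul_of_nonneg hz2.summable (fun n => f2nonneg n) (fun n => f2nonneg n)

lemma hF : HasSum F (π ^ 4 / 36) := by
  have := hz2.mul hz2 sF
  convert this using 1
  all_goals try rfl
  ring

noncomputable def Glt (p : ℕ × ℕ) : ℝ := if p.2 < p.1 then F p else 0
noncomputable def Ggt (p : ℕ × ℕ) : ℝ := if p.1 < p.2 then F p else 0
noncomputable def Geq (p : ℕ × ℕ) : ℝ := if p.1 = p.2 then F p else 0

lemma Fnonneg (p : ℕ × ℕ) : 0 ≤ F p := mul_nonneg (f2nonneg _) (f2nonneg _)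

lemma sGlt : Summable Glt := by
  refine sF.of_nonneg_of_le (fun p => ?_) (fun p => ?_) <;> unfold Glt <;> split
  · exact Fnonneg p
  · rfl
  · rfl
  · exact Fnonneg p

lemma hGeq : HasSum Geq (π ^ 4 / 90) := by
  have hinj : Function.Injective (fun n : ℕ => (n, n)) := by
    intro a b h; exact congrArg Prod.fst h
  rw [← Function.Injective.hasSum_iff hinj]
  · convert hz4 using 1
    funext n
    simp only [Function.comp, Geq, F, f2, if_pos rfl]
    rw [div_mul_div_comm, one_mul, ← pow_add]
    norm_num
  · intro p hp
    simp only [Set.mem_range, not_exists] at hp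
    have : p.1 ≠ p.2 := by
      intro h
      exact hp p.1 (by rw [Prod.ext_iff]; exact ⟨rfl, h⟩)
    simp [Geq, this]

lemma hGgt_of_Glt {W : ℝ} (h : HasSum Glt W) : HasSum Ggt W := by
  have := (Equiv.prodComm ℕ ℕ).hasSum_iff.2 h
  convert this using 1
  funext p
  simp only [Ggt, Glt, Equiv.prodComm_apply, Function.comp, Prod.swap, F]
  rcases lt_or_ge p.1 p.2 with h1 | h1
  · simp [h1, mul_comm]
  · simp [not_lt.mpr h1]

lemma decomp : F = fun p => Glt p + Geq p + Ggt p := by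
  funext p
  rcases lt_trichotomy p.1 p.2 with h | h | h
  · simp [Glt, Geq, Ggt, h, h.ne, lt_asymm h]
  · simp [Glt, Geq, Ggt, h, lt_irrefl]
  · have hne : p.1 ≠ p.2 := (ne_of_gt h)
    simp [Glt, Geq, Ggt, h, (lt_asymm h), hne]

lemma hGlt : HasSum Glt (π ^ 4 / 120) := by
  obtain ⟨W, hW⟩ := sGlt
  have htot : HasSum F (W + π ^ 4 / 90 + W) := by
    rw [decomp]; exact (hW.add hGeq).add (hGgt_of_Glt hW)
  have h36 := hF.unique htot
  have : W = π ^ 4 / 120 := by linarith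
  rwa [this] at hW

lemma Wval : ∑' n : ℕ, f2 n * (∑ m ∈ range n, f2 m) = π ^ 4 / 120 := by
  have h1 := hGlt.tsum_eq
  rw [sGlt.tsum_prod] at h1
  rw [← h1]
  congr 1
  funext n
  have h2 : ∑' m : ℕ, Glt (n, m) = ∑ m ∈ range n, Glt (n, m) := by
    refine tsum_eq_sum (fun m hm => ?_)
    simp only [mem_range, not_lt] at hm
    simp [Glt, not_lt.mpr hm]
  rw [h2, mul_sum]
  refine Finset.sum_congr rfl (fun m hm => ?_)
  rw [mem_range] at hm
  simp [Glt, hm, F]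

-- partial fractions / antidiagonal
lemma key (k : ℕ) : ∑ p ∈ antidiagonal k, f2 p.1 * f2 p.2
    = 2 / ((k:ℝ)+2)^2 * Q k + 4 / ((k:ℝ)+2)^3 * Hh k := by
  rw [Finset.Nat.sum_antidiagonal_eq_sum_range_succ_mk]
  have point : ∀ i ∈ range (k+1), f2 i * f2 (k - i) =
      (1/((k:ℝ)+2)^2) * (f2 i + f2 (k - i)) + (2/((k:ℝ)+2)^3) * (f1 i + f1 (k - i)) := by
    intro i hi
    have hik : i ≤ k := Nat.lt_succ_iff.mp (mem_range.mp hi)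
    have hikr : (i:ℝ) ≤ k := by exact_mod_cast hik
    have hcast : ((k - i : ℕ) : ℝ) = (k:ℝ) - i := by rw [Nat.cast_sub hik]
    simp only [f2, f1, hcast]
    have h1 : (i:ℝ) + 1 ≠ 0 := by positivity
    have h2 : (k:ℝ) - i + 1 ≠ 0 := by nlinarith
    have h3 : (k:ℝ) + 2 ≠ 0 := by positivity
    field_simp
    ring
  rw [Finset.sum_congr rfl point, Finset.sum_add_distrib, ← Finset.mul_sum, ← Finset.mul_sum,
    Finset.sum_add_distrib, Finset.sum_add_distrib]
  have r2 : ∑ i ∈ range (k+1), f2 (k - i) = Q k := by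
    have := Finset.sum_range_reflect f2 (k+1)
    simpa [Q] using this
  have r1 : ∑ i ∈ range (k+1), f1 (k - i) = Hh k := by
    have := Finset.sum_range_reflect f1 (k+1)
    simpa [Hh] using this
  rw [r2, r1]
  show _ * (Q k + Q k) + _ * (Hh k + Hh k) = _
  ring

-- summable of w and c1
noncomputable def w (n : ℕ) : ℝ := f2 n * (∑ m ∈ range n, f2 m)

lemma sw : Summable w := by
  refine Summable.of_nonneg_of_le (fun n => ?_) (fun n => ?_) (hz2.summable.mul_right (π ^ 2 / 6))
  · exact mul_nonneg (f2nonneg n) (Finset.sum_nonneg fun i _ => f2nonneg i)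
  · refine mul_le_mul_of_nonneg_left ?_ (f2nonneg n)
    calc ∑ m ∈ range n, f2 m ≤ ∑' m, f2 m :=
          Summable.sum_le_tsum (range n) (fun i _ => f2nonneg i) hz2.summable
      _ = π ^ 2 / 6 := hz2.tsum_eq

lemma hw : HasSum w (π ^ 4 / 120) := sw.hasSum_iff.2 Wval

lemma hwsucc : HasSum (fun k => w (k + 1)) (π ^ 4 / 120) := by
  have h := (hasSum_nat_add_iff' (f := w) 1).2 hw
  simpa [w] using h

lemma hc1 : HasSum (fun k : ℕ => 2 / ((k:ℝ)+2)^2 * Q k) (π ^ 4 / 60) := by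
  have h := hwsucc.mul_left 2
  convert h using 1
  all_goals try rfl
  · funext k
    simp only [w, f2, Q]
    push_cast
    ring
  · ring

lemma hA : HasSum (fun k : ℕ => ∑ p ∈ antidiagonal k, f2 p.1 * f2 p.2) (π ^ 4 / 36) := by
  have hsumm : Summable (fun k : ℕ => ∑ p ∈ antidiagonal k, f2 p.1 * f2 p.2) :=
    summable_sum_mul_antidiagonal_of_summable_mul sF
  have ht := Summable.tsum_mul_tsum_eq_tsum_sum_antidiagonal hz2.summable hz2.summable sF
  rw [hz2.tsum_eq] at ht
  refine hsumm.hasSum_iff.2 ?_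
  rw [← ht]
  ring

lemma hc2 : HasSum (fun k : ℕ => 4 / ((k:ℝ)+2)^3 * Hh k) (π ^ 4 / 90) := by
  have hsum : HasSum (fun k : ℕ => 2 / ((k:ℝ)+2)^2 * Q k + 4 / ((k:ℝ)+2)^3 * Hh k) (π ^ 4 / 36) := by
    have := hA
    simp only [key] at this
    exact this
  have h := hsum.sub hc1
  convert h using 1
  all_goals try rfl
  · funext k; ring
  · ring

lemma hU : HasSum (fun k : ℕ => Hh k / ((k:ℝ)+2)^3) (π ^ 4 / 360) := by
  have h := hc2.div_const 4
  convert h using 1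
  all_goals try rfl
  · funext k; ring
  · ring

lemma hs : HasSum (fun n : ℕ => Hh n / ((n:ℝ)+1)^3) (π ^ 4 / 72) := by
  have hsucc : HasSum (fun k : ℕ => Hh (k+1) / (((k+1:ℕ):ℝ)+1)^3)
      (π ^ 4 / 360 + (π ^ 4 / 90 - 1)) := by
    convert hU.add hg4 using 1
    all_goals try rfl
    funext k
    have hrec : Hh (k+1) = Hh k + 1/((k:ℝ)+2) := by
      simp only [Hh, sum_range_succ, f1]
      push_cast
      ring
    have h3 : ((k:ℝ)+2) ≠ 0 := by positivity
    rw [hrec]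
    push_cast
    field_simp
    ring
  have h := (hasSum_nat_add_iff (f := fun n : ℕ => Hh n / ((n:ℝ)+1)^3) 1).1 hsucc
  convert h using 1
  all_goals try rfl
  have h0 : Hh 0 / ((0:ℝ)+1)^3 = 1 := by simp [Hh, f1]
  simp only [range_one, sum_singleton, Nat.cast_zero, h0]
  ring

theorem stmt_18 :
    ∑' n : ℕ, (∑ j ∈ Finset.range (n + 1), (1 : ℝ) / (j + 1)) / ((n : ℝ) + 1) ^ 3 =
      Real.pi ^ 4 / 72 := by
  exact hs.tsum_eq
end
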